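/- Let G be a connected graph with no star cutset, and let (X1, X2, A1, B1, A2, B2) be a split of a minimally-sided non-path 2-join of G with X_i a minimal side. Then |A_i| ≥ 2 and |B_i| ≥ 2. -/

import Mathlib

open SimpleGraph Set

/-- `(X1, X2, A1, B1, A2, B2)` is a split of a 2-join of `G`. -/
def IsTwoJoinSplit {V : Type*} (G : SimpleGraph V) (X1 X2 A1 B1 A2 B2 : Set V) : Prop :=
  X1 ∪ X2 = Set.univ ∧ Disjoint X1 X2 ∧
  A1 ⊆ X1 ∧ B1 ⊆ X1 ∧ A2 ⊆ X2 ∧ B2 ⊆ X2 ∧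
  Disjoint A1 B1 ∧ Disjoint A2 B2 ∧
  A1.Nonempty ∧ B1.Nonempty ∧ A2.Nonempty ∧ B2.Nonempty ∧
  (∀ a1 ∈ A1, ∀ a2 ∈ A2, G.Adj a1 a2) ∧
  (∀ b1 ∈ B1, ∀ b2 ∈ B2, G.Adj b1 b2) ∧
  (∀ x ∈ X1, ∀ y ∈ X2, G.Adj x y → (x ∈ A1 ∧ y ∈ A2) ∨ (x ∈ B1 ∧ y ∈ B2)) ∧
  3 ≤ X1.ncard ∧ 3 ≤ X2.ncard

/-- `(X1, X2)` is a 2-join of `G`. -/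
def IsTwoJoin {V : Type*} (G : SimpleGraph V) (X1 X2 : Set V) : Prop :=
  ∃ A1 B1 A2 B2, IsTwoJoinSplit G X1 X2 A1 B1 A2 B2

/-- `(a1, a2, b1, b2)` is a proper 4-tuple of `G`. -/
def ProperQuad {V : Type*} (G : SimpleGraph V) (a1 a2 b1 b2 : V) : Prop :=
  a1 ≠ a2 ∧ a1 ≠ b1 ∧ a1 ≠ b2 ∧ a2 ≠ b1 ∧ a2 ≠ b2 ∧ b1 ≠ b2 ∧
  G.Adj a1 a2 ∧ G.Adj b1 b2 ∧ ¬ G.Adj a1 b2 ∧ ¬ G.Adj b1 a2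

/-- `G[X]` is a chordless path with one end in `A`, the other end in `B`,
and interior in `X \ (A ∪ B)`. -/
def IsPathSide {V : Type*} (G : SimpleGraph V) (X A B : Set V) : Prop :=
  ∃ (k : ℕ) (f : Fin (k+1) → V), Function.Injective f ∧
    X = Set.range f ∧ f 0 ∈ A ∧ f (Fin.last k) ∈ B ∧
    (∀ i : Fin (k+1), i ≠ 0 → i ≠ Fin.last k → f i ∉ A ∪ B) ∧
    (∀ i j : Fin (k+1), G.Adj (f i) (f j) ↔ ((i : ℕ) + 1 = (j : ℕ) ∨ (j : ℕ) + 1 = (i : ℕ)))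

/-- `(X1, X2)` is a path 2-join of `G`: it has a split one of whose sides is a path-side. -/
def IsPathTwoJoin {V : Type*} (G : SimpleGraph V) (X1 X2 : Set V) : Prop :=
  ∃ A1 B1 A2 B2, IsTwoJoinSplit G X1 X2 A1 B1 A2 B2 ∧
    (IsPathSide G X1 A1 B1 ∨ IsPathSide G X2 A2 B2)

/-- A non-path 2-join is a 2-join that is not a path 2-join. -/
def IsNonPathTwoJoin {V : Type*} (G : SimpleGraph V) (X1 X2 : Set V) : Prop :=
  IsTwoJoin G X1 X2 ∧ ¬ IsPathTwoJoin G X1 X2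

/-- `G` has a star cutset: a set `S` containing a vertex adjacent to all the rest of
`S`, whose removal disconnects `G`. -/
def HasStarCutset {V : Type*} (G : SimpleGraph V) : Prop :=
  ∃ S : Set V, (∃ x ∈ S, ∀ y ∈ S, y ≠ x → G.Adj x y) ∧
    ∃ u v : ↥(Sᶜ), ¬ (G.induce Sᶜ).Reachable u v


lemma star_cutset_of {V : Type*} (G : SimpleGraph V) (S T : Set V) (x : V)
    (hxS : x ∈ S) (hxadj : ∀ y ∈ S, y ≠ x → G.Adj x y)
    (u v : V) (huS : u ∉ S) (hvS : v ∉ S) (huT : u ∈ T) (hvT : v ∉ T)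
    (hT : ∀ p ∈ T, ∀ q, G.Adj p q → q ∉ S → q ∈ T) :
    HasStarCutset G := by
  refine ⟨S, ⟨x, hxS, hxadj⟩, ⟨u, huS⟩, ⟨v, hvS⟩, ?_⟩
  intro hr
  apply hvT
  obtain ⟨p⟩ := hr
  have key : ∀ {w z : ↥(Sᶜ)}, (G.induce Sᶜ).Walk w z → (w : V) ∈ T → (z : V) ∈ T := by
    intro w z q
    induction q with
    | nil => exact id
    | cons h q ih =>
      rename_i w' y z'
      intro hw
      exact ih (hT _ hw _ (SimpleGraph.comap_adj.mp h) y.2)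
  exact key p huT

lemma pathside_reverse {V : Type*} {G : SimpleGraph V} {X A B : Set V}
    (hp : IsPathSide G X A B) : IsPathSide G X B A := by
  obtain ⟨k, f, hinj, hX, h0, hl, hint, hadj⟩ := hp
  refine ⟨k, f ∘ Fin.rev, hinj.comp Fin.rev_injective, ?_, ?_, ?_, ?_, ?_⟩
  · rw [Fin.rev_surjective.range_comp, hX]
  · simpa [Fin.rev_zero] using hl
  · simpa [Fin.rev_last] using h0
  · intro i hi0 hil
    have h1 : i.rev ≠ 0 := by
      intro h; apply hil; have := congrArg Fin.rev h; rwa [Fin.rev_rev, Fin.rev_zero] at this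
    have h2 : i.rev ≠ Fin.last k := by
      intro h; apply hi0; have := congrArg Fin.rev h; rwa [Fin.rev_rev, Fin.rev_last] at this
    have := hint i.rev h1 h2
    simp only [Set.mem_union, Function.comp_apply] at this ⊢
    tauto
  · intro i j
    simp only [Function.comp_apply]
    rw [hadj]
    have hi := i.isLt
    have hj := j.isLt
    rw [Fin.val_rev, Fin.val_rev]
    omega

lemma pathside_cons {V : Type*} {G : SimpleGraph V} {X A B : Set V} {a : V}
    (hp : IsPathSide G X A B) (haX : a ∉ X) (hAX : A ⊆ X)
    (hadj : ∀ x ∈ X, (G.Adj a x ↔ x ∈ A))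
    (hAB : ∀ x, x ∈ A → x ∈ B → False) :
    IsPathSide G (insert a X) ({a} : Set V) B := by
  obtain ⟨k, f, hinj, hX, h0, hl, hint, hadjf⟩ := hp
  have hmemX : ∀ i : Fin (k+1), f i ∈ X := by intro i; rw [hX]; exact Set.mem_range_self i
  have hfa : ∀ i : Fin (k+1), f i ≠ a := by intro i h; exact haX (h ▸ hmemX i)
  have hA0 : ∀ j : Fin (k+1), f j ∈ A ↔ j = 0 := by
    intro j
    constructor
    · intro hj
      by_contra hj0
      by_cases hjl : j = Fin.last k
      · exact hAB _ hj (hjl ▸ hl)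
      · exact hint j hj0 hjl (Or.inl hj)
    · rintro rfl; exact h0
  set g : Fin (k+1+1) → V := Fin.cons a f with hg
  have hg0 : g 0 = a := by rw [hg]; simp
  have hgs : ∀ i : Fin (k+1), g i.succ = f i := by intro i; rw [hg]; simp
  refine ⟨k+1, g, ?_, ?_, ?_, ?_, ?_, ?_⟩
  · intro i j
    induction i using Fin.cases with
    | zero =>
      induction j using Fin.cases with
      | zero => intro _; rfl
      | succ j' =>
        rw [hg0, hgs]
        intro h
        exact absurd h.symm (hfa j')
    | succ i' =>
      induction j using Fin.cases with
      | zero =>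
        rw [hg0, hgs]
        intro h
        exact absurd h (hfa i')
      | succ j' =>
        rw [hgs, hgs]
        intro h
        rw [hinj h]
  · rw [hg, Fin.range_cons, hX]
  · rw [hg0]; rfl
  · rw [← Fin.succ_last, hgs]; exact hl
  · intro i hi0 hil
    induction i using Fin.cases with
    | zero => exact absurd rfl hi0
    | succ i' =>
      rw [hgs]
      rintro (h | h)
      · exact hfa i' h
      · by_cases hi'l : i' = Fin.last k
        · exact hil (by rw [hi'l, Fin.succ_last])
        · by_cases hi'0 : i' = 0
          · exact hAB _ (hi'0 ▸ h0) (hi'0 ▸ h)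
          · exact hint i' hi'0 hi'l (Or.inr h)
  · intro i j
    induction i using Fin.cases with
    | zero =>
      induction j using Fin.cases with
      | zero =>
        rw [hg0]
        exact iff_of_false (G.irrefl) (by simp)
      | succ j' =>
        rw [hg0, hgs]
        rw [hadj _ (hmemX j'), hA0 j']
        simp only [Fin.val_zero, Fin.val_succ]
        rw [Fin.ext_iff]
        simp only [Fin.val_zero]
        omega
    | succ i' =>
      induction j using Fin.cases with
      | zero =>
        rw [hg0, hgs, G.adj_comm]
        rw [hadj _ (hmemX i'), hA0 i']
        simp only [Fin.val_zero, Fin.val_succ]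
        rw [Fin.ext_iff]
        simp only [Fin.val_zero]
        omega
      | succ j' =>
        rw [hgs, hgs, hadjf i' j']
        simp only [Fin.val_succ]
        omega

lemma pathside_tail {V : Type*} {G : SimpleGraph V} {X B A2 : Set V} {a : V}
    (hp : IsPathSide G X ({a} : Set V) B) (haB : a ∉ B)
    (hA2X : A2 ⊆ X) (haA2 : a ∉ A2)
    (hadj : ∀ x ∈ X, x ≠ a → (G.Adj a x ↔ x ∈ A2)) :
    IsPathSide G (X \ {a}) A2 B := by
  obtain ⟨k, f, hinj, hX, h0, hl, hint, hadjf⟩ := hp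
  have hf0 : f 0 = a := h0
  have hmemX : ∀ i : Fin (k+1), f i ∈ X := by intro i; rw [hX]; exact Set.mem_range_self i
  cases k with
  | zero =>
    exfalso
    have : f (Fin.last 0) = a := by rw [show (Fin.last 0) = 0 from rfl, hf0]
    exact haB (this ▸ hl)
  | succ k' =>
    have hv1 : ((1 : Fin (k'+2)) : ℕ) = 1 := Fin.val_one k'
    have hf1A2 : f 1 ∈ A2 := by
      have hne : f 1 ≠ a := by
        rw [← hf0]; intro h
        have := hinj h
        rw [Fin.ext_iff, hv1, Fin.val_zero] at this
        omega
      rw [← hadj _ (hmemX 1) hne, ← hf0]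
      rw [hadjf 0 1]
      left
      rw [Fin.val_zero, hv1]
    have hA2eq : ∀ x, x ∈ A2 ↔ x = f 1 := by
      intro x
      constructor
      · intro hx
        have hxX : x ∈ X := hA2X hx
        have hxa : x ≠ a := fun h => haA2 (h ▸ hx)
        obtain ⟨j, rfl⟩ := hX ▸ hxX
        have hadj' : G.Adj (f 0) (f j) := by rw [hf0]; exact (hadj _ hxX hxa).mpr hx
        rw [hadjf 0 j] at hadj'
        have hj1 : j = 1 := by
          rw [Fin.ext_iff, hv1]
          rw [Fin.val_zero] at hadj'
          omega
        rw [hj1]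
      · intro h; rw [h]; exact hf1A2
    refine ⟨k', fun i => f i.succ, ?_, ?_, ?_, ?_, ?_, ?_⟩
    · intro i j h
      exact Fin.succ_injective _ (hinj h)
    · ext x
      constructor
      · rintro ⟨hxX, hxa⟩
        obtain ⟨j, rfl⟩ := hX ▸ hxX
        have hj0 : j ≠ 0 := by rintro rfl; exact hxa hf0
        obtain ⟨j', rfl⟩ := Fin.eq_succ_of_ne_zero hj0
        exact ⟨j', rfl⟩
      · rintro ⟨i, rfl⟩
        refine ⟨hmemX _, ?_⟩
        intro h
        rw [Set.mem_singleton_iff, ← hf0] at h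
        exact absurd (hinj h) (Fin.succ_ne_zero i)
    · show f (Fin.succ 0) ∈ A2
      have : Fin.succ (0 : Fin (k'+1)) = 1 := by
        rw [Fin.ext_iff, Fin.val_succ, Fin.val_zero, hv1]
      rw [this]
      exact hf1A2
    · show f (Fin.last k').succ ∈ B
      rw [Fin.succ_last]
      exact hl
    · intro i hi0 hil
      show f i.succ ∉ A2 ∪ B
      rintro (h | h)
      · rw [hA2eq] at h
        have h1 := hinj h
        apply hi0
        rw [Fin.ext_iff, Fin.val_succ] at h1
        rw [hv1] at h1
        rw [Fin.ext_iff, Fin.val_zero]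
        omega
      · have h1 : i.succ ≠ 0 := Fin.succ_ne_zero i
        have h2 : i.succ ≠ Fin.last (k'+1) := by
          rw [← Fin.succ_last]
          intro hh
          exact hil (Fin.succ_injective _ hh)
        exact hint i.succ h1 h2 (Or.inr h)
    · intro i j
      show G.Adj (f i.succ) (f j.succ) ↔ _
      rw [hadjf]
      simp only [Fin.val_succ]
      omega

lemma split_swap {V : Type*} {G : SimpleGraph V} {X1 X2 A1 B1 A2 B2 : Set V}
    (h : IsTwoJoinSplit G X1 X2 A1 B1 A2 B2) : IsTwoJoinSplit G X1 X2 B1 A1 B2 A2 := by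
  obtain ⟨h1,h2,h3,h4,h5,h6,h7,h8,h9,h10,h11,h12,h13,h14,h15,h16,h17⟩ := h
  exact ⟨h1,h2,h4,h3,h6,h5,h7.symm,h8.symm,h10,h9,h12,h11,h14,h13,
    fun x hx y hy hxy => (h15 x hx y hy hxy).symm, h16, h17⟩

lemma aux_main {V : Type*} (G : SimpleGraph V) (hstar : ¬ HasStarCutset G)
    (X1 X2 A1 B1 A2 B2 : Set V) (hsplit : IsTwoJoinSplit G X1 X2 A1 B1 A2 B2)
    (hnp : IsNonPathTwoJoin G X1 X2)
    (hmin : ∀ X1' X2', IsNonPathTwoJoin G X1' X2' → ¬ (X1' ⊂ X1) ∧ ¬ (X2' ⊂ X1)) :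
    2 ≤ A1.ncard := by
  have hsplit0 := hsplit
  obtain ⟨huniv, hdisj, hA1X, hB1X, hA2X, hB2X, hA1B1, hA2B2, hA1ne, hB1ne, hA2ne, hB2ne,
    hAA, hBB, hcross, hX1c, hX2c⟩ := hsplit
  have hX1fin : X1.Finite := by
    by_contra h
    rw [Set.Infinite.ncard h] at hX1c; omega
  have hX2fin : X2.Finite := by
    by_contra h
    rw [Set.Infinite.ncard h] at hX2c; omega
  by_contra hlt
  have hA1fin : A1.Finite := hX1fin.subset hA1X
  have h1 : A1.ncard = 1 := by
    have := (Set.ncard_pos hA1fin).mpr hA1ne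
    omega
  obtain ⟨a, hA1a⟩ := Set.ncard_eq_one.mp h1
  subst hA1a
  have haX1 : a ∈ X1 := hA1X rfl
  have haB1 : a ∉ B1 := fun h => Set.disjoint_left.mp hA1B1 rfl h
  have haX2 : a ∉ X2 := fun h => Set.disjoint_left.mp hdisj haX1 h
  have hmem : ∀ x : V, x ∈ X1 ∨ x ∈ X2 := by
    intro x
    have : x ∈ X1 ∪ X2 := by rw [huniv]; exact Set.mem_univ x
    exact this
  have hX1X2 : ∀ x ∈ X1, x ∉ X2 := fun x hx h => Set.disjoint_left.mp hdisj hx h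
  have hcross' : ∀ x ∈ X1, ∀ y ∈ X2, G.Adj x y → (x = a ∧ y ∈ A2) ∨ (x ∈ B1 ∧ y ∈ B2) := by
    intro x hx y hy hxy
    rcases hcross x hx y hy hxy with ⟨h1, h2⟩ | h
    · exact Or.inl ⟨h1, h2⟩
    · exact Or.inr h
  set N : Set V := {x | x ∈ X1 ∧ G.Adj a x} with hNdef
  have hNmem : ∀ x, x ∈ N ↔ x ∈ X1 ∧ G.Adj a x := by
    intro x; rw [hNdef]; exact Iff.rfl
  have hNX1 : ∀ x ∈ N, x ∈ X1 := fun x hx => ((hNmem x).mp hx).1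
  have hNadj : ∀ x ∈ N, G.Adj a x := fun x hx => ((hNmem x).mp hx).2
  have hNintro : ∀ x, x ∈ X1 → G.Adj a x → x ∈ N := fun x h1 h2 => (hNmem x).mpr ⟨h1, h2⟩
  have haN : a ∉ N := fun h => G.irrefl (hNadj a h)
  have hadjN : ∀ y, G.Adj a y → y ∈ N ∨ y ∈ A2 := by
    intro y hy
    rcases hmem y with h | h
    · exact Or.inl (hNintro y h hy)
    · rcases hcross' a haX1 y h hy with ⟨_, h2⟩ | ⟨h2, _⟩
      · exact Or.inr h2
      · exact absurd h2 haB1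
  have hnadj_b2 : ∀ b2 ∈ B2, ¬ G.Adj a b2 := by
    intro b2 hb2 h
    rcases hadjN b2 h with h' | h'
    · exact hX1X2 b2 (hNX1 b2 h') (hB2X hb2)
    · exact Set.disjoint_left.mp hA2B2 h' hb2
  have hthird : ∀ x y : V, ∃ w ∈ X1, w ≠ x ∧ w ≠ y := by
    intro x y
    have hsub : ¬ X1 ⊆ {x, y} := by
      intro hsub
      have h1 := Set.ncard_le_ncard hsub ((Set.finite_singleton y).insert x)
      have h2 := Set.ncard_insert_le x ({y} : Set V)
      rw [Set.ncard_singleton] at h2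
      omega
    obtain ⟨w, hw1, hw2⟩ := Set.not_subset.mp hsub
    simp only [Set.mem_insert_iff, Set.mem_singleton_iff] at hw2
    push_neg at hw2
    exact ⟨w, hw1, hw2.1, hw2.2⟩
  -- Lemma B : a has no neighbour in B1
  have hNB1 : ∀ b ∈ B1, ¬ G.Adj a b := by
    intro b hbB1 hab
    have hbX1 : b ∈ X1 := hB1X hbB1
    obtain ⟨a2, ha2⟩ := hA2ne
    have ha2X2 : a2 ∈ X2 := hA2X ha2
    have hba : b ≠ a := fun h => G.irrefl (h ▸ hab)
    have hba2 : ¬ G.Adj b a2 := by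
      intro h
      rcases hcross' b hbX1 a2 ha2X2 h with ⟨h1, _⟩ | ⟨_, h2⟩
      · exact hba h1
      · exact Set.disjoint_left.mp hA2B2 ha2 h2
    have hX1Nb : ∀ x ∈ X1, x = b ∨ G.Adj b x := by
      by_contra hcon
      push_neg at hcon
      obtain ⟨u, huX1, hub, hubadj⟩ := hcon
      apply hstar
      refine star_cutset_of G {y | y = b ∨ G.Adj b y} {x | x ∈ X1 ∧ ¬(x = b ∨ G.Adj b x)} b
        (Or.inl rfl) ?_ u a2 ?_ ?_ ⟨huX1, ?_⟩ ?_ ?_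
      · intro y hy hyb
        rcases hy with h | h
        · exact absurd h hyb
        · exact h
      · rintro (h | h)
        · exact hub h
        · exact hubadj h
      · rintro (h | h)
        · exact hX1X2 b hbX1 (h ▸ ha2X2)
        · exact hba2 h
      · rintro (h | h)
        · exact hub h
        · exact hubadj h
      · intro h
        exact hX1X2 a2 h.1 ha2X2
      · intro p hp q hpq hqS
        rcases hmem q with hq | hq
        · exact ⟨hq, hqS⟩
        · rcases hcross' p hp.1 q hq hpq with ⟨h1, _⟩ | ⟨_, h2⟩
          · exact absurd (Or.inr (h1 ▸ hab.symm)) hp.2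
          · exact absurd (Or.inr (hBB b hbB1 q h2)) hqS
    obtain ⟨w, hwX1, hwa, hwb⟩ := hthird a b
    apply hstar
    refine star_cutset_of G {y | (y = b ∨ G.Adj b y) ∧ y ≠ w} {x | x = w} b
      ⟨Or.inl rfl, fun h => hwb h.symm⟩ ?_ w a2 ?_ ?_ rfl ?_ ?_
    · intro y hy hyb
      rcases hy.1 with h | h
      · exact absurd h hyb
      · exact h
    · intro h
      exact h.2 rfl
    · intro h
      rcases h.1 with h' | h'
      · exact hX1X2 b hbX1 (h' ▸ ha2X2)
      · exact hba2 h'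
    · intro h
      exact hX1X2 w hwX1 (h ▸ ha2X2)
    · intro z hz q hpq hqS
      exfalso
      rw [show z = w from hz] at hpq
      have hqw : q ≠ w := (G.ne_of_adj hpq).symm
      have hqnb : ¬(q = b ∨ G.Adj b q) := fun h => hqS ⟨h, hqw⟩
      rcases hmem q with hq | hq
      · exact hqnb (hX1Nb q hq)
      · rcases hcross' w hwX1 q hq hpq with ⟨h1, _⟩ | ⟨_, h2⟩
        · exact hwa h1
        · exact hqnb (Or.inr (hBB b hbB1 q h2))
  -- Lemma C : N is nonempty
  have hNne : N.Nonempty := by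
    rw [Set.nonempty_iff_ne_empty]
    intro hNe
    have hNadj' : ∀ x ∈ X1, ¬ G.Adj a x := by
      intro x hx hax
      have : x ∈ N := hNintro x hx hax
      rw [hNe] at this
      exact this
    obtain ⟨b, hbB1⟩ := hB1ne
    have hbX1 : b ∈ X1 := hB1X hbB1
    have hba : ¬ G.Adj b a := fun h => hNadj' b hbX1 h.symm
    have hab : a ≠ b := fun h => haB1 (h ▸ hbB1)
    have hX1Nb : ∀ x ∈ X1, x = a ∨ x = b ∨ G.Adj b x := by
      by_contra hcon
      push_neg at hcon
      obtain ⟨u, huX1, hua, hub, hubadj⟩ := hcon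
      apply hstar
      refine star_cutset_of G {y | y = b ∨ G.Adj b y}
        {x | x ∈ X1 ∧ x ≠ a ∧ ¬(x = b ∨ G.Adj b x)} b
        (Or.inl rfl) ?_ u a ?_ ?_ ⟨huX1, hua, ?_⟩ ?_ ?_
      · intro y hy hyb
        rcases hy with h | h
        · exact absurd h hyb
        · exact h
      · rintro (h | h)
        · exact hub h
        · exact hubadj h
      · rintro (h | h)
        · exact hab h
        · exact hba h
      · rintro (h | h)
        · exact hub h
        · exact hubadj h
      · intro h
        exact h.2.1 rfl
      · intro p hp q hpq hqS
        obtain ⟨hpX1, hpa, hpS⟩ := hp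
        rcases hmem q with hq | hq
        · refine ⟨hq, ?_, hqS⟩
          intro hqa
          apply hNadj' p hpX1
          rw [hqa] at hpq
          exact hpq.symm
        · rcases hcross' p hpX1 q hq hpq with ⟨h1, _⟩ | ⟨_, h2⟩
          · exact absurd h1 hpa
          · exact absurd (Or.inr (hBB b hbB1 q h2)) hqS
    obtain ⟨w, hwX1, hwa, hwb⟩ := hthird a b
    apply hstar
    refine star_cutset_of G {y | (y = b ∨ G.Adj b y) ∧ y ≠ w} {x | x = w} b
      ⟨Or.inl rfl, fun h => hwb h.symm⟩ ?_ w a ?_ ?_ rfl ?_ ?_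
    · intro y hy hyb
      rcases hy.1 with h | h
      · exact absurd h hyb
      · exact h
    · intro h
      exact h.2 rfl
    · intro h
      rcases h.1 with h' | h'
      · exact hab h'
      · exact hba h'
    · intro h
      exact hwa ((show a = w from h).symm)
    · intro z hz q hpq hqS
      exfalso
      rw [show z = w from hz] at hpq
      have hqw : q ≠ w := (G.ne_of_adj hpq).symm
      have hqnb : ¬(q = b ∨ G.Adj b q) := fun h => hqS ⟨h, hqw⟩
      rcases hmem q with hq | hq
      · rcases hX1Nb q hq with h | h
        · apply hNadj' w hwX1
          rw [h] at hpq
          exact hpq.symm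
        · exact hqnb h
      · rcases hcross' w hwX1 q hq hpq with ⟨h1, _⟩ | ⟨_, h2⟩
        · exact hwa h1
        · exact hqnb (Or.inr (hBB b hbB1 q h2))
  by_cases h4 : 4 ≤ X1.ncard
  · -- main construction: move a to the other side
    have hX1'sub : X1 \ {a} ⊆ X1 := Set.diff_subset
    have haX1' : a ∉ X1 \ {a} := fun h => h.2 rfl
    have haX2' : a ∈ X2 ∪ {a} := Or.inr rfl
    have hNX1' : N ⊆ X1 \ {a} := fun x hx => ⟨hNX1 x hx, fun h => haN (h ▸ hx)⟩
    have hB1X1' : B1 ⊆ X1 \ {a} := fun x hx => ⟨hB1X hx, fun h => haB1 (h ▸ hx)⟩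
    have hsplit' : IsTwoJoinSplit G (X1 \ {a}) (X2 ∪ {a}) N B1 {a} B2 := by
      refine ⟨?_, ?_, hNX1', hB1X1', ?_, ?_, ?_, ?_, hNne, hB1ne, ⟨a, rfl⟩, hB2ne, ?_, hBB,
        ?_, ?_, ?_⟩
      · apply Set.eq_univ_of_forall
        intro x
        rcases hmem x with hx | hx
        · by_cases hxa : x = a
          · exact Or.inr (Or.inr hxa)
          · exact Or.inl ⟨hx, hxa⟩
        · exact Or.inr (Or.inl hx)
      · rw [Set.disjoint_left]
        rintro x hx (h | h)
        · exact hX1X2 x hx.1 h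
        · exact hx.2 h
      · exact fun x hx => Or.inr hx
      · exact fun x hx => Or.inl (hB2X hx)
      · rw [Set.disjoint_left]
        intro x hx hx'
        exact hNB1 x hx' (hNadj x hx)
      · rw [Set.disjoint_left]
        intro x hx hx'
        exact haX2 (hB2X ((show x = a from hx) ▸ hx'))
      · intro n hn y hy
        rw [show y = a from hy]
        exact (hNadj n hn).symm
      · rintro x hx y (hy | hy) hxy
        · rcases hcross' x hx.1 y hy hxy with ⟨h1, _⟩ | h
          · exact absurd h1 hx.2
          · exact Or.inr h
        · refine Or.inl ⟨?_, hy⟩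
          rw [show y = a from hy] at hxy
          exact hNintro x hx.1 hxy.symm
      · rw [Set.ncard_diff_singleton_of_mem haX1]
        omega
      · have hsub : X2 ⊆ X2 ∪ {a} := Set.subset_union_left
        have hfin : (X2 ∪ {a} : Set V).Finite := hX2fin.union (Set.finite_singleton a)
        have := Set.ncard_le_ncard hsub hfin
        omega
    have hss : X1 \ {a} ⊂ X1 := by
      rw [Set.ssubset_iff_subset_ne]
      refine ⟨hX1'sub, ?_⟩
      intro h
      exact haX1' (h.symm ▸ haX1)
    have hptj : IsPathTwoJoin G (X1 \ {a}) (X2 ∪ {a}) := by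
      by_contra h
      exact (hmin (X1 \ {a}) (X2 ∪ {a}) ⟨⟨N, B1, {a}, B2, hsplit'⟩, h⟩).1 hss
    obtain ⟨C1, D1, C2, D2, hsp, hside⟩ := hptj
    have key : ∀ C1 D1 C2 D2, IsTwoJoinSplit G (X1 \ {a}) (X2 ∪ {a}) C1 D1 C2 D2 → a ∈ C2 →
        C1 = N ∧ D1 = B1 ∧ C2 = {a} ∧ D2 = B2 := by
      intro C1 D1 C2 D2 hsp haC2
      obtain ⟨_, _, hC1X, hD1X, hC2X, hD2X, hC1D1, hC2D2, hC1ne, hD1ne, hC2ne, hD2ne,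
        hCC, hDD, hcr, _, _⟩ := hsp
      have hC1N : C1 = N := by
        apply Set.Subset.antisymm
        · intro c hc
          exact hNintro c (hC1X hc).1 (hCC c hc a haC2).symm
        · intro n hn
          rcases hcr n (hNX1' hn) a haX2' (hNadj n hn).symm with ⟨h1, _⟩ | ⟨_, h2⟩
          · exact h1
          · exact absurd h2 (fun h => Set.disjoint_left.mp hC2D2 haC2 h)
      have hC2a : C2 = {a} := by
        apply Set.Subset.antisymm
        · intro c2 hc2
          by_contra hne
          obtain ⟨n, hnN⟩ := hNne
          have hnC1 : n ∈ C1 := by rw [hC1N]; exact hnN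
          have hadj2 := hCC n hnC1 c2 hc2
          have hc2X2 : c2 ∈ X2 := by
            rcases hC2X hc2 with h | h
            · exact h
            · exact absurd h hne
          rcases hcross' n (hNX1 n hnN) c2 hc2X2 hadj2 with ⟨h1, _⟩ | ⟨h1, _⟩
          · exact haN (h1 ▸ hnN)
          · exact hNB1 n h1 (hNadj n hnN)
        · intro x hx
          rw [show x = a from hx]
          exact haC2
      have hD2a : ∀ d2 ∈ D2, d2 ≠ a := by
        intro d2 hd2 h
        apply Set.disjoint_left.mp hC2D2 _ hd2
        rw [h]
        exact haC2
      have hD2X2 : ∀ d2 ∈ D2, d2 ∈ X2 := by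
        intro d2 hd2
        rcases hD2X hd2 with h | h
        · exact h
        · exact absurd h (hD2a d2 hd2)
      have hD2B2 : D2 ⊆ B2 := by
        intro d2 hd2
        obtain ⟨d1, hd1⟩ := hD1ne
        rcases hcross' d1 (hD1X hd1).1 d2 (hD2X2 d2 hd2) (hDD d1 hd1 d2 hd2) with
          ⟨h1, _⟩ | ⟨_, h2⟩
        · exact absurd h1 (hD1X hd1).2
        · exact h2
      have hD1B1 : D1 = B1 := by
        apply Set.Subset.antisymm
        · intro d hd
          obtain ⟨d2, hd2⟩ := hD2ne
          rcases hcross' d (hD1X hd).1 d2 (hD2X2 d2 hd2) (hDD d hd d2 hd2) with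
            ⟨h1, _⟩ | ⟨h1, _⟩
          · exact absurd h1 (hD1X hd).2
          · exact h1
        · intro b hb
          obtain ⟨d2, hd2⟩ := hD2ne
          have hadj2 : G.Adj b d2 := hBB b hb d2 (hD2B2 hd2)
          rcases hcr b (hB1X1' hb) d2 (hD2X hd2) hadj2 with ⟨h1, _⟩ | ⟨h1, _⟩
          · exfalso
            rw [hC1N] at h1
            exact hNB1 b hb (hNadj b h1)
          · exact h1
      have hD2B2' : D2 = B2 := by
        apply Set.Subset.antisymm hD2B2
        intro b2 hb2
        obtain ⟨d1, hd1⟩ := hD1ne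
        have hd1B1 : d1 ∈ B1 := by rw [← hD1B1]; exact hd1
        have hadj2 : G.Adj d1 b2 := hBB d1 hd1B1 b2 hb2
        rcases hcr d1 (hD1X hd1) b2 (Or.inl (hB2X hb2)) hadj2 with ⟨h1, _⟩ | ⟨_, h2⟩
        · exfalso
          rw [hC1N] at h1
          exact hNB1 d1 hd1B1 (hNadj d1 h1)
        · exact h2
      exact ⟨hC1N, hD1B1, hC2a, hD2B2'⟩
    have haC2D2 : a ∈ C2 ∨ a ∈ D2 := by
      obtain ⟨n, hn⟩ := hNne
      rcases id hsp with ⟨_, _, _, _, _, _, _, _, _, _, _, _, _, _, hcr, _, _⟩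
      rcases hcr n (hNX1' hn) a haX2' (hNadj n hn).symm with ⟨_, h⟩ | ⟨_, h⟩
      · exact Or.inl h
      · exact Or.inr h
    have hfin1 : IsPathSide G (X1 \ {a}) N B1 → False := by
      intro hp
      apply hnp.2
      have hinsert : insert a (X1 \ {a}) = X1 := by
        ext x
        simp only [Set.mem_insert_iff, Set.mem_diff, Set.mem_singleton_iff]
        constructor
        · rintro (rfl | hx)
          · exact haX1
          · exact hx.1
        · intro hx
          by_cases hxa : x = a
          · exact Or.inl hxa
          · exact Or.inr ⟨hx, hxa⟩
      have hps := pathside_cons hp haX1' hNX1'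
        (fun x hx => ⟨fun h => hNintro x hx.1 h, fun h => hNadj x h⟩)
        (fun x h1 h2 => hNB1 x h2 (hNadj x h1))
      rw [hinsert] at hps
      exact ⟨{a}, B1, A2, B2, hsplit0, Or.inl hps⟩
    have hfin2 : IsPathSide G (X2 ∪ {a}) ({a} : Set V) B2 → False := by
      intro hp
      apply hnp.2
      have hdiff : (X2 ∪ {a}) \ {a} = X2 := by
        ext x
        simp only [Set.mem_diff, Set.mem_union, Set.mem_singleton_iff]
        constructor
        · rintro ⟨hx | hx, hxa⟩
          · exact hx
          · exact absurd hx hxa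
        · intro hx
          exact ⟨Or.inl hx, fun h => haX2 (h ▸ hx)⟩
      have hps := pathside_tail hp (fun h => haX2 (hB2X h))
        (fun x hx => Or.inl (hA2X hx)) (fun h => haX2 (hA2X h)) ?_
      · rw [hdiff] at hps
        exact ⟨{a}, B1, A2, B2, hsplit0, Or.inr hps⟩
      · intro x hx hxa
        have hxX2 : x ∈ X2 := by
          rcases hx with h | h
          · exact h
          · exact absurd h hxa
        constructor
        · intro h
          rcases hadjN x h with h' | h'
          · exact absurd hxX2 (hX1X2 x (hNX1 x h'))
          · exact h'
        · intro h
          exact hAA a rfl x h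
    rcases haC2D2 with hC | hD
    · obtain ⟨hC1N, hD1B1, hC2a, hD2B2⟩ := key C1 D1 C2 D2 hsp hC
      rcases hside with h | h
      · rw [hC1N, hD1B1] at h; exact hfin1 h
      · rw [hC2a, hD2B2] at h; exact hfin2 h
    · have hswap := split_swap hsp
      obtain ⟨hD1N, hC1B1, hD2a, hC2B2⟩ := key D1 C1 D2 C2 hswap hD
      rcases hside with h | h
      · rw [hC1B1, hD1N] at h; exact hfin1 (pathside_reverse h)
      · rw [hC2B2, hD2a] at h; exact hfin2 (pathside_reverse h)
  · -- |X1| = 3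
    have h3 : X1.ncard = 3 := le_antisymm (by omega) hX1c
    obtain ⟨p, hpN⟩ := hNne
    have hpX1 : p ∈ X1 := hNX1 p hpN
    have hap : G.Adj a p := hNadj p hpN
    have hpa : p ≠ a := fun h => G.irrefl (h ▸ hap)
    have hpB1 : p ∉ B1 := fun h => hNB1 p h hap
    have hsubap : ({a, p} : Set V) ⊆ X1 := by
      rintro x (rfl | rfl)
      · exact haX1
      · exact hpX1
    obtain ⟨q, hqdiff⟩ : ∃ q, X1 \ {a, p} = {q} := by
      apply Set.ncard_eq_one.mp
      rw [Set.ncard_diff hsubap ((Set.finite_singleton p).insert a)]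
      rw [Set.ncard_pair (Ne.symm hpa)]
      omega
    have hqmem : q ∈ X1 \ ({a, p} : Set V) := by rw [hqdiff]; rfl
    have hqX1 : q ∈ X1 := hqmem.1
    have hqa : q ≠ a := fun h => hqmem.2 (Or.inl h)
    have hqp : q ≠ p := fun h => hqmem.2 (Or.inr h)
    have hX1eq : ∀ x ∈ X1, x = a ∨ x = p ∨ x = q := by
      intro x hx
      by_cases h1 : x = a
      · exact Or.inl h1
      by_cases h2 : x = p
      · exact Or.inr (Or.inl h2)
      have hxd : x ∈ X1 \ ({a, p} : Set V) := by
        refine ⟨hx, ?_⟩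
        rintro (h | h)
        · exact h1 h
        · exact h2 h
      rw [hqdiff] at hxd
      exact Or.inr (Or.inr hxd)
    have haq : ¬ G.Adj a q := by
      intro h
      obtain ⟨b, hbB1⟩ := hB1ne
      rcases hX1eq b (hB1X hbB1) with rfl | rfl | rfl
      · exact haB1 hbB1
      · exact hNB1 _ hbB1 hap
      · exact hNB1 _ hbB1 h
    have hqB1 : q ∈ B1 := by
      obtain ⟨b, hbB1⟩ := hB1ne
      rcases hX1eq b (hB1X hbB1) with rfl | rfl | rfl
      · exact absurd hbB1 haB1
      · exact absurd hap (hNB1 _ hbB1)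
      · exact hbB1
    have hpq : G.Adj p q := by
      by_contra hpq
      obtain ⟨b2, hb2⟩ := hB2ne
      apply hstar
      refine star_cutset_of G {y | (y = a ∨ G.Adj a y) ∧ y ≠ p} {x | x = p} a
        ⟨Or.inl rfl, fun h => hpa h.symm⟩ ?_ p b2 ?_ ?_ rfl ?_ ?_
      · intro y hy hya
        rcases hy.1 with h | h
        · exact absurd h hya
        · exact h
      · intro h
        exact h.2 rfl
      · intro h
        rcases h.1 with h' | h'
        · exact hX1X2 a haX1 (h' ▸ hB2X hb2)
        · exact hnadj_b2 b2 hb2 h'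
      · intro h
        exact hX1X2 p hpX1 ((show b2 = p from h) ▸ hB2X hb2)
      · intro x hx y hxy hyS
        exfalso
        rw [show x = p from hx] at hxy
        apply hyS
        have hyp : y ≠ p := (G.ne_of_adj hxy).symm
        refine ⟨?_, hyp⟩
        rcases hmem y with hy | hy
        · rcases hX1eq y hy with rfl | rfl | rfl
          · exact Or.inl rfl
          · exact absurd rfl hyp
          · exact absurd hxy hpq
        · rcases hcross' p hpX1 y hy hxy with ⟨h1, _⟩ | ⟨h1, _⟩
          · exact absurd h1 hpa
          · exact absurd h1 hpB1
    have hX1set : X1 = {a, p, q} := by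
      apply Set.Subset.antisymm
      · intro x hx
        rcases hX1eq x hx with h | h | h
        · exact Or.inl h
        · exact Or.inr (Or.inl h)
        · exact Or.inr (Or.inr h)
      · rintro x (rfl | rfl | rfl)
        · exact haX1
        · exact hpX1
        · exact hqX1
    apply hnp.2
    refine ⟨{a}, B1, A2, B2, hsplit0, Or.inl ?_⟩
    have v0 : (![a, p, q] : Fin 3 → V) 0 = a := rfl
    have v1 : (![a, p, q] : Fin 3 → V) 1 = p := rfl
    have v2 : (![a, p, q] : Fin 3 → V) 2 = q := rfl
    have vlast : (![a, p, q] : Fin 3 → V) (Fin.last 2) = q := rfl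
    have hfin3 : ∀ i : Fin 3, i = 0 ∨ i = 1 ∨ i = 2 := by decide
    refine ⟨2, ![a, p, q], ?_, ?_, ?_, ?_, ?_, ?_⟩
    · intro i j hij
      rcases hfin3 i with rfl | rfl | rfl <;> rcases hfin3 j with rfl | rfl | rfl
      · rfl
      · rw [v0, v1] at hij; exact absurd hij.symm hpa
      · rw [v0, v2] at hij; exact absurd hij.symm hqa
      · rw [v0, v1] at hij; exact absurd hij hpa
      · rfl
      · rw [v1, v2] at hij; exact absurd hij.symm hqp
      · rw [v0, v2] at hij; exact absurd hij hqa
      · rw [v1, v2] at hij; exact absurd hij hqp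
      · rfl
    · rw [hX1set]
      apply Set.Subset.antisymm
      · rintro x (rfl | rfl | rfl)
        · exact ⟨0, v0⟩
        · exact ⟨1, v1⟩
        · exact ⟨2, v2⟩
      · rintro x ⟨i, rfl⟩
        rcases hfin3 i with rfl | rfl | rfl
        · exact Or.inl v0
        · exact Or.inr (Or.inl v1)
        · exact Or.inr (Or.inr v2)
    · exact Set.mem_singleton_iff.mpr v0
    · rw [vlast]; exact hqB1
    · intro i hi0 hil
      rcases hfin3 i with rfl | rfl | rfl
      · exact absurd rfl hi0
      · rw [v1]
        rintro (h | h)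
        · exact hpa h
        · exact hpB1 h
      · exact absurd (show (2 : Fin 3) = Fin.last 2 from rfl) hil
    · intro i j
      rcases hfin3 i with rfl | rfl | rfl <;> rcases hfin3 j with rfl | rfl | rfl
      · rw [v0]; exact iff_of_false (G.irrefl) (by decide)
      · rw [v0, v1]; exact iff_of_true hap (by decide)
      · rw [v0, v2]; exact iff_of_false haq (by decide)
      · rw [v0, v1]; exact iff_of_true hap.symm (by decide)
      · rw [v1]; exact iff_of_false (G.irrefl) (by decide)
      · rw [v1, v2]; exact iff_of_true hpq (by decide)
      · rw [v0, v2]; exact iff_of_false (fun h => haq h.symm) (by decide)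
      · rw [v1, v2]; exact iff_of_true hpq.symm (by decide)
      · rw [v2]; exact iff_of_false (G.irrefl) (by decide)

theorem stmt_10 {V : Type*} (G : SimpleGraph V) (hG : G.Connected)
    (hstar : ¬ HasStarCutset G)
    (X1 X2 A1 B1 A2 B2 : Set V) (hsplit : IsTwoJoinSplit G X1 X2 A1 B1 A2 B2)
    (hnp : IsNonPathTwoJoin G X1 X2)
    (hmin : ∀ X1' X2', IsNonPathTwoJoin G X1' X2' → ¬ (X1' ⊂ X1) ∧ ¬ (X2' ⊂ X1)) :
    2 ≤ A1.ncard ∧ 2 ≤ B1.ncard := by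
  exact ⟨aux_main G hstar X1 X2 A1 B1 A2 B2 hsplit hnp hmin,
    aux_main G hstar X1 X2 B1 A1 B2 A2 (split_swap hsplit) hnp hmin⟩
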